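/- Let f : ℝᴰ → ℝ be twice differentiable and nonnegative, with ‖∇²f(θ)‖_{p→q} ≤ H₀ + H₁·f(θ) for all θ (H₀, H₁ ≥ 0, 1/p + 1/q = 1). Then for all x, y with ‖y − x‖_p ≤ 1/√H₁: f(y) ≤ f(x) + ⟨∇f(x), y − x⟩ + (H₀ + H₁·f(x))·‖y − x‖_p². -/

import Mathlib

open scoped BigOperators

noncomputable def lpNorm (p : ENNReal) {ι : Type*} [Fintype ι] (x : ι → ℝ) : ℝ :=
  ‖(WithLp.equiv p (ι → ℝ)).symm x‖

noncomputable def opNorm (p q : ENNReal) {ι κ : Type*} [Fintype ι] [Fintype κ]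
    (A : Matrix ι κ ℝ) : ℝ :=
  sSup {c | ∃ x : κ → ℝ, lpNorm p x ≤ 1 ∧ c = lpNorm q (A.mulVec x)}

lemma lpNorm_eq_sum {ι : Type*} [Fintype ι] {p : ENNReal} (hp : 0 < p.toReal) (x : ι → ℝ) :
    lpNorm p x = (∑ i, |x i| ^ p.toReal) ^ (1 / p.toReal) := by
  rw [lpNorm, PiLp.norm_eq_sum hp]
  simp [WithLp.equiv_symm_apply, PiLp.toLp_apply, Real.norm_eq_abs]

lemma lpNorm_eq_ciSup {ι : Type*} [Fintype ι] (x : ι → ℝ) :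
    lpNorm ⊤ x = ⨆ i, |x i| := by
  rw [lpNorm, PiLp.norm_eq_ciSup]
  simp [WithLp.equiv_symm_apply, PiLp.toLp_apply, Real.norm_eq_abs]

lemma lpNorm_nonneg {ι : Type*} [Fintype ι] {p : ENNReal} (hp : 1 ≤ p) (x : ι → ℝ) :
    0 ≤ lpNorm p x := by
  haveI : Fact (1 ≤ p) := ⟨hp⟩
  exact norm_nonneg _

lemma lpNorm_pos {ι : Type*} [Fintype ι] {p : ENNReal} (hp : 1 ≤ p) {x : ι → ℝ} (hx : x ≠ 0) :
    0 < lpNorm p x := by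
  haveI : Fact (1 ≤ p) := ⟨hp⟩
  rw [lpNorm]
  rw [norm_pos_iff]
  intro h
  apply hx
  have := congrArg (WithLp.equiv p (ι → ℝ)) h
  simpa using this

lemma lpNorm_smul {ι : Type*} [Fintype ι] {p : ENNReal} (hp : 1 ≤ p) (c : ℝ) (x : ι → ℝ) :
    lpNorm p (c • x) = |c| * lpNorm p x := by
  haveI : Fact (1 ≤ p) := ⟨hp⟩
  rw [lpNorm, lpNorm, WithLp.equiv_symm_apply, WithLp.toLp_smul, norm_smul, Real.norm_eq_abs]

-- one-infinity Hölder
lemma holder_one_inf {ι : Type*} [Fintype ι] (u w : ι → ℝ) :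
    ∑ i, u i * w i ≤ lpNorm ⊤ u * lpNorm 1 w := by
  rw [lpNorm_eq_ciSup, lpNorm_eq_sum (by norm_num)]
  simp only [ENNReal.toReal_one, Real.rpow_one, one_div_one, Real.rpow_one]
  have hS : ∀ i, |u i| ≤ ⨆ j, |u j| := fun i => le_ciSup (f := fun j => |u j|) (Set.Finite.bddAbove (Set.finite_range _)) i
  have hS0 : 0 ≤ ⨆ j, |u j| := Real.iSup_nonneg (fun j => abs_nonneg _)
  calc ∑ i, u i * w i ≤ ∑ i, (⨆ j, |u j|) * |w i| := by
        apply Finset.sum_le_sum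
        intro i _
        calc u i * w i ≤ |u i * w i| := le_abs_self _
          _ = |u i| * |w i| := abs_mul _ _
          _ ≤ (⨆ j, |u j|) * |w i| := by
              exact mul_le_mul_of_nonneg_right (hS i) (abs_nonneg _)
    _ = (⨆ j, |u j|) * ∑ i, |w i| := by rw [Finset.mul_sum]

lemma holder_sum {ι : Type*} [Fintype ι] {p q : ENNReal} (hp : 1 ≤ p) (hq : 1 ≤ q)
    (hpq : 1/p + 1/q = 1) (u w : ι → ℝ) :
    ∑ i, u i * w i ≤ lpNorm p u * lpNorm q w := by
  rcases eq_or_ne p ⊤ with hptop | hptop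
  · -- q = 1
    have hq1 : q = 1 := by
      rw [hptop] at hpq
      simpa using hpq
    subst hptop hq1
    exact holder_one_inf u w
  rcases eq_or_ne q ⊤ with hqtop | hqtop
  · have hp1 : p = 1 := by
      rw [hqtop] at hpq
      simpa using hpq
    subst hqtop hp1
    rw [mul_comm]
    calc ∑ i, u i * w i = ∑ i, w i * u i := by simp [mul_comm]
      _ ≤ lpNorm ⊤ w * lpNorm 1 u := holder_one_inf w u
  · -- both finite
    have hp0 : p ≠ 0 := by intro h; rw [h] at hp; simp at hp
    have hq0 : q ≠ 0 := by intro h; rw [h] at hq; simp at hq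
    have hp1 : 1 < p := by
      rcases lt_or_eq_of_le hp with h | h
      · exact h
      · exfalso
        rw [← h] at hpq
        simp only [one_div, inv_one] at hpq
        have h0 : q⁻¹ = 0 := by
          have h2 := ENNReal.add_right_inj (a := (1:ENNReal)) (b := q⁻¹) (c := 0) (by norm_num)
          rw [← h2]
          simpa using hpq
        exact hqtop (by simpa using h0)
    have h1q : 1 < q := by
      rcases lt_or_eq_of_le hq with h | h
      · exact h
      · exfalso
        rw [← h] at hpq
        simp only [one_div, inv_one] at hpq
        rw [add_comm] at hpq
        have h0 : p⁻¹ = 0 := by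
          have h2 := ENNReal.add_right_inj (a := (1:ENNReal)) (b := p⁻¹) (c := 0) (by norm_num)
          rw [← h2]
          simpa using hpq
        exact hptop (by simpa using h0)
    have hprlt : 1 < p.toReal := by
      rw [← ENNReal.toReal_one]
      exact (ENNReal.toReal_lt_toReal (by norm_num) hptop).mpr hp1
    have hqrlt : 1 < q.toReal := by
      rw [← ENNReal.toReal_one]
      exact (ENNReal.toReal_lt_toReal (by norm_num) hqtop).mpr h1q
    have hsum : 1/p.toReal + 1/q.toReal = 1 := by
      have h1 : (1/p + 1/q).toReal = 1 := by rw [hpq]; norm_num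
      rw [ENNReal.toReal_add (by simp [hp0]) (by simp [hq0])] at h1
      rw [ENNReal.toReal_div, ENNReal.toReal_div] at h1
      simpa using h1
    have hconj : Real.HolderConjugate p.toReal q.toReal :=
      ⟨by rw [inv_one, inv_eq_one_div, inv_eq_one_div]; exact hsum, by linarith, by linarith⟩
    have := Real.inner_le_Lp_mul_Lq (s := Finset.univ) u w hconj
    rw [lpNorm_eq_sum (by linarith), lpNorm_eq_sum (by linarith)]
    exact this

lemma lpNorm_zero' {ι : Type*} [Fintype ι] (p : ENNReal) (hp : 1 ≤ p) :
    lpNorm p (0 : ι → ℝ) = 0 := by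
  haveI : Fact (1 ≤ p) := ⟨hp⟩
  rw [lpNorm, WithLp.equiv_symm_apply, WithLp.toLp_zero, norm_zero]

lemma opNorm_mulVec_le {ι κ : Type*} [Fintype ι] [Fintype κ] {p q : ENNReal}
    (hp : 1 ≤ p) (hq : 1 ≤ q) (A : Matrix ι κ ℝ) (v : κ → ℝ) :
    lpNorm q (A.mulVec v) ≤ opNorm p q A * lpNorm p v := by
  haveI : Fact (1 ≤ p) := ⟨hp⟩
  haveI : Fact (1 ≤ q) := ⟨hq⟩
  set S := {c | ∃ x : κ → ℝ, lpNorm p x ≤ 1 ∧ c = lpNorm q (A.mulVec x)} with hS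
  have hop : opNorm p q A = sSup S := rfl
  set L : WithLp p (κ → ℝ) →ₗ[ℝ] WithLp q (ι → ℝ) :=
    (WithLp.linearEquiv q ℝ (ι → ℝ)).symm.toLinearMap ∘ₗ A.mulVecLin ∘ₗ
      (WithLp.linearEquiv p ℝ (κ → ℝ)).toLinearMap with hL
  set T := LinearMap.toContinuousLinearMap L with hT
  have hTapp : ∀ x : κ → ℝ, lpNorm q (A.mulVec x) = ‖T ((WithLp.equiv p (κ → ℝ)).symm x)‖ := by
    intro x
    rfl
  have hbdd : BddAbove S := by
    refine ⟨‖T‖, ?_⟩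
    rintro c ⟨x, hx, rfl⟩
    rw [hTapp x]
    calc ‖T ((WithLp.equiv p (κ → ℝ)).symm x)‖
        ≤ ‖T‖ * ‖(WithLp.equiv p (κ → ℝ)).symm x‖ := T.le_opNorm _
      _ ≤ ‖T‖ * 1 := mul_le_mul_of_nonneg_left hx (norm_nonneg _)
      _ = ‖T‖ := mul_one _
  rcases eq_or_ne v 0 with rfl | hv
  · rw [Matrix.mulVec_zero, lpNorm_zero' q hq, lpNorm_zero' p hp, mul_zero]
  · set r := lpNorm p v with hr
    have hrpos : 0 < r := lpNorm_pos hp hv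
    have hx1 : lpNorm p (r⁻¹ • v) = 1 := by
      rw [lpNorm_smul hp, abs_inv, abs_of_pos hrpos, inv_mul_cancel₀ (ne_of_gt hrpos)]
    have hmem : lpNorm q (A.mulVec (r⁻¹ • v)) ∈ S := ⟨r⁻¹ • v, le_of_eq hx1, rfl⟩
    have hle := le_csSup hbdd hmem
    rw [Matrix.mulVec_smul, lpNorm_smul hq, abs_inv, abs_of_pos hrpos] at hle
    rw [hop]
    calc lpNorm q (A.mulVec v) = r * (r⁻¹ * lpNorm q (A.mulVec v)) := by field_simp
      _ ≤ r * sSup S := mul_le_mul_of_nonneg_left hle hrpos.le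
      _ = sSup S * r := mul_comm _ _

lemma ode_core {c : ℝ} (hc : 0 < c) {F F' F'' : ℝ → ℝ}
    (h1 : ∀ t, HasDerivAt F (F' t) t) (h2 : ∀ t, HasDerivAt F' (F'' t) t)
    (hnn : ∀ t, 0 ≤ F t) (hbd : ∀ t, F'' t ≤ c ^ 2 * F t) :
    -(c * F 0) ≤ F' 0 := by
  by_contra hcon
  push_neg at hcon
  have hb0 : 0 ≤ F 0 := hnn 0
  set a := F' 0 with ha
  set b := F 0 with hbdef
  have hac : a / c < -b := by rw [div_lt_iff₀ hc]; nlinarith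
  set α : ℝ := (b + a / c) / 2 with hα
  set β : ℝ := (b - a / c) / 2 with hβ
  have hαneg : α < 0 := by rw [hα]; nlinarith
  have hβpos : 0 < β := by rw [hβ]; nlinarith
  set w : ℝ → ℝ := fun t => α * Real.exp (c * t) + β * Real.exp (-(c * t)) with hwdef
  set w' : ℝ → ℝ := fun t => α * c * Real.exp (c * t) - β * c * Real.exp (-(c * t)) with hw'def
  have hct : ∀ t : ℝ, HasDerivAt (fun s : ℝ => c * s) c t := by
    intro t; simpa using (hasDerivAt_id t).const_mul c
  have hcw : ∀ t, HasDerivAt w (w' t) t := by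
    intro t
    have h3 := (((hct t).exp).const_mul α).add ((((hct t).neg).exp).const_mul β)
    refine h3.congr_deriv ?_
    simp [hw'def]; ring
  have hcw' : ∀ t, HasDerivAt w' (c ^ 2 * w t) t := by
    intro t
    have h3 := (((hct t).exp).const_mul (α * c)).sub ((((hct t).neg).exp).const_mul (β * c))
    refine h3.congr_deriv ?_
    simp [hwdef]; ring
  set d : ℝ → ℝ := fun t => w t - F t with hddef
  set d' : ℝ → ℝ := fun t => w' t - F' t with hd'def
  set d'' : ℝ → ℝ := fun t => c ^ 2 * w t - F'' t with hd''def
  have hd1 : ∀ t, HasDerivAt d (d' t) t := fun t => (hcw t).sub (h1 t)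
  have hd2 : ∀ t, HasDerivAt d' (d'' t) t := fun t => (hcw' t).sub (h2 t)
  have hd''ge : ∀ t, c ^ 2 * d t ≤ d'' t := by
    intro t
    have := hbd t
    simp only [hddef, hd''def]
    nlinarith
  set v : ℝ → ℝ := fun t => d' t + c * d t with hvdef
  have hv : ∀ t, HasDerivAt v (d'' t + c * d' t) t :=
    fun t => (hd2 t).add ((hd1 t).const_mul c)
  set G1 : ℝ → ℝ := fun t => Real.exp (-(c * t)) * v t with hG1def
  have hG1 : ∀ t, HasDerivAt G1
      ((-c) * Real.exp (-(c * t)) * v t + Real.exp (-(c * t)) * (d'' t + c * d' t)) t := by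
    intro t
    have := (((hct t).neg).exp).mul (hv t)
    refine this.congr_deriv ?_
    simp only [Pi.neg_apply]; ring
  have hG1mono : Monotone G1 := by
    apply monotone_of_deriv_nonneg (fun t => (hG1 t).differentiableAt)
    intro t
    rw [(hG1 t).deriv]
    have h4 : c ^ 2 * d t ≤ d'' t := hd''ge t
    have h5 : (0:ℝ) < Real.exp (-(c * t)) := Real.exp_pos _
    have heq : (-c) * Real.exp (-(c * t)) * v t + Real.exp (-(c * t)) * (d'' t + c * d' t)
        = Real.exp (-(c * t)) * (d'' t - c ^ 2 * d t) := by
      simp only [hvdef]; ring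
    rw [heq]
    exact mul_nonneg h5.le (by linarith)
  have hw0 : w 0 = b := by
    show α * Real.exp (c * 0) + β * Real.exp (-(c * 0)) = b
    rw [hα, hβ]
    norm_num
    ring
  have hw'0 : w' 0 = a := by
    show α * c * Real.exp (c * 0) - β * c * Real.exp (-(c * 0)) = a
    rw [hα, hβ]
    norm_num
    field_simp
    ring
  have hv0 : v 0 = 0 := by
    show d' 0 + c * d 0 = 0
    show (w' 0 - F' 0) + c * (w 0 - F 0) = 0
    rw [hw0, hw'0, ← ha, ← hbdef]
    ring
  have hvnn : ∀ t, 0 ≤ t → 0 ≤ v t := by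
    intro t ht
    have := hG1mono ht
    simp only [hG1def, mul_zero, neg_zero, Real.exp_zero, one_mul, hv0, mul_zero] at this
    have h5 : (0:ℝ) < Real.exp (-(c * t)) := Real.exp_pos _
    nlinarith
  set G2 : ℝ → ℝ := fun t => Real.exp (c * t) * d t with hG2def
  have hG2 : ∀ t, HasDerivAt G2 (Real.exp (c * t) * v t) t := by
    intro t
    have := ((hct t).exp).mul (hd1 t)
    refine this.congr_deriv ?_
    simp only [hvdef]; ring
  have hG2mono : MonotoneOn G2 (Set.Ici (0:ℝ)) := by
    apply monotoneOn_of_deriv_nonneg (convex_Ici 0)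
      (fun t _ => (hG2 t).differentiableAt.continuousAt.continuousWithinAt)
      (fun t _ => (hG2 t).differentiableAt.differentiableWithinAt)
    intro t ht
    rw [interior_Ici] at ht
    rw [(hG2 t).deriv]
    have := hvnn t (le_of_lt ht)
    positivity
  have hdnn : ∀ t, 0 ≤ t → 0 ≤ d t := by
    intro t ht
    have h0 : G2 0 ≤ G2 t := hG2mono (Set.self_mem_Ici) ht ht
    simp only [hG2def, mul_zero, Real.exp_zero, one_mul] at h0
    have hd0 : d 0 = 0 := by
      show w 0 - F 0 = 0
      rw [hw0, ← hbdef]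
      ring
    rw [hd0] at h0
    have h5 : (0:ℝ) < Real.exp (c * t) := Real.exp_pos _
    nlinarith
  -- pick T with w T < 0
  set T : ℝ := Real.log ((β + 1) / (-α)) / c with hTdef
  have hratpos : (0:ℝ) < (β + 1) / (-α) := div_pos (by linarith) (by linarith)
  have hrat1 : (1:ℝ) ≤ (β + 1) / (-α) := by
    rw [le_div_iff₀ (by linarith : (0:ℝ) < -α)]
    simp only [hα, hβ] at *
    nlinarith
  have hT0 : 0 ≤ T := by
    apply div_nonneg _ (le_of_lt hc)
    exact Real.log_nonneg hrat1
  have hexpT : Real.exp (c * T) = (β + 1) / (-α) := by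
    rw [hTdef, mul_div_cancel₀ _ (ne_of_gt hc)]
    exact Real.exp_log hratpos
  have hexpnT : Real.exp (-(c * T)) ≤ 1 := by
    apply Real.exp_le_one_iff.mpr
    simp only [neg_nonpos]
    exact mul_nonneg hc.le hT0
  have hwT : w T ≤ -1 := by
    show α * Real.exp (c * T) + β * Real.exp (-(c * T)) ≤ -1
    rw [hexpT]
    have h6 : α * ((β + 1) / (-α)) = -(β + 1) := by
      rw [mul_div_assoc', div_eq_iff (by linarith : (-α:ℝ) ≠ 0)]
      ring
    rw [h6]
    nlinarith [Real.exp_pos (-(c * T))]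
  have := hdnn T hT0
  have hF := hnn T
  simp only [hddef] at this
  linarith

lemma ode_deriv_le {c : ℝ} (hc : 0 < c) {F F' F'' : ℝ → ℝ}
    (h1 : ∀ t, HasDerivAt F (F' t) t) (h2 : ∀ t, HasDerivAt F' (F'' t) t)
    (hnn : ∀ t, 0 ≤ F t) (hbd : ∀ t, F'' t ≤ c ^ 2 * F t) :
    ∀ s, F' s ≤ c * F s := by
  intro s
  have hinner : ∀ t : ℝ, HasDerivAt (fun τ : ℝ => s - τ) (-1) t := by
    intro t
    simpa using (hasDerivAt_id t).const_sub s
  have hr1 : ∀ t, HasDerivAt (fun τ => F (s - τ)) (-F' (s - t)) t := by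
    intro t
    have := (h1 (s - t)).comp t (hinner t)
    refine this.congr_deriv ?_; ring
  have hr2 : ∀ t, HasDerivAt (fun τ => -F' (s - τ)) (F'' (s - t)) t := by
    intro t
    have := ((h2 (s - t)).comp t (hinner t)).neg
    refine this.congr_deriv ?_; ring
  have h9 := ode_core hc hr1 hr2 (fun t => hnn _) (fun t => hbd _)
  norm_num at h9
  linarith

lemma ode_exp_bound {c : ℝ} (hc : 0 < c) {F F' F'' : ℝ → ℝ}
    (h1 : ∀ t, HasDerivAt F (F' t) t) (h2 : ∀ t, HasDerivAt F' (F'' t) t)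
    (hnn : ∀ t, 0 ≤ F t) (hbd : ∀ t, F'' t ≤ c ^ 2 * F t) :
    ∀ t, 0 ≤ t → F t ≤ F 0 * Real.exp (c * t) := by
  have hd : ∀ s, F' s ≤ c * F s := ode_deriv_le hc h1 h2 hnn hbd
  have hct : ∀ t : ℝ, HasDerivAt (fun s : ℝ => c * s) c t := by
    intro t; simpa using (hasDerivAt_id t).const_mul c
  set G : ℝ → ℝ := fun t => Real.exp (-(c * t)) * F t with hGdef
  have hG : ∀ t, HasDerivAt G ((-c) * Real.exp (-(c * t)) * F t + Real.exp (-(c * t)) * F' t) t := by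
    intro t
    have := (((hct t).neg).exp).mul (h1 t)
    refine this.congr_deriv ?_; simp only [Pi.neg_apply]; ring
  have hGanti : Antitone G := by
    apply antitone_of_deriv_nonpos (fun t => (hG t).differentiableAt)
    intro t
    rw [(hG t).deriv]
    have h5 : (0:ℝ) < Real.exp (-(c * t)) := Real.exp_pos _
    have : (-c) * Real.exp (-(c * t)) * F t + Real.exp (-(c * t)) * F' t
        = Real.exp (-(c * t)) * (F' t - c * F t) := by ring
    rw [this]
    have := hd t
    nlinarith
  intro t ht
  have h0 : G t ≤ G 0 := hGanti ht
  simp only [hGdef, mul_zero, neg_zero, Real.exp_zero, one_mul] at h0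
  have h5 : (0:ℝ) < Real.exp (-(c * t)) := Real.exp_pos _
  have h6 : Real.exp (-(c * t)) * Real.exp (c * t) = 1 := by
    rw [← Real.exp_add]; simp
  have h7 := mul_le_mul_of_nonneg_left h0 (Real.exp_pos (c*t)).le
  have h8 : Real.exp (c*t) * (Real.exp (-(c*t)) * F t) = F t := by
    rw [← mul_assoc, mul_comm (Real.exp (c*t)), h6, one_mul]
  rw [h8] at h7
  linarith

lemma ode_taylor {c : ℝ} (hc : 0 < c) (hc1 : c ≤ 1) {F F' F'' : ℝ → ℝ}
    (h1 : ∀ t, HasDerivAt F (F' t) t) (h2 : ∀ t, HasDerivAt F' (F'' t) t)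
    (hnn : ∀ t, 0 ≤ F t) (hbd : ∀ t, F'' t ≤ c ^ 2 * F t) :
    F 1 ≤ F 0 + F' 0 + F 0 * c ^ 2 := by
  have hexp : ∀ t, 0 ≤ t → F t ≤ F 0 * Real.exp (c * t) := ode_exp_bound hc h1 h2 hnn hbd
  have hF0 : 0 ≤ F 0 := hnn 0
  have hct : ∀ t : ℝ, HasDerivAt (fun s : ℝ => c * s) c t := by
    intro t; simpa using (hasDerivAt_id t).const_mul c
  set d : ℝ → ℝ := fun t => F 0 + t * F' 0 + F 0 * (Real.exp (c * t) - 1 - c * t) - F t with hddef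
  set d' : ℝ → ℝ := fun t => F' 0 + F 0 * (c * Real.exp (c * t) - c) - F' t with hd'def
  have hd1 : ∀ t, HasDerivAt d (d' t) t := by
    intro t
    have hlin : HasDerivAt (fun t : ℝ => F 0 + t * F' 0) (F' 0) t := by
      simpa using ((hasDerivAt_id t).mul_const (F' 0)).const_add (F 0)
    have hmid : HasDerivAt (fun t : ℝ => F 0 * (Real.exp (c * t) - 1 - c * t))
        (F 0 * (c * Real.exp (c * t) - c)) t := by
      have := (((hct t).exp).sub_const 1).sub (hct t)
      have h7 := this.const_mul (F 0)
      refine h7.congr_deriv ?_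
      ring
    have := (hlin.add hmid).sub (h1 t)
    exact this
  have hd2 : ∀ t, HasDerivAt d' (F 0 * (c ^ 2 * Real.exp (c * t)) - F'' t) t := by
    intro t
    have hmid : HasDerivAt (fun t : ℝ => F 0 * (c * Real.exp (c * t) - c))
        (F 0 * (c ^ 2 * Real.exp (c * t))) t := by
      have := (((hct t).exp).const_mul c).sub_const c
      have h7 := this.const_mul (F 0)
      refine h7.congr_deriv ?_
      ring
    have := ((hmid.const_add (F' 0)).sub (h2 t))
    exact this
  have hd'mono : MonotoneOn d' (Set.Ici (0:ℝ)) := by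
    apply monotoneOn_of_deriv_nonneg (convex_Ici 0)
      (fun t _ => (hd2 t).differentiableAt.continuousAt.continuousWithinAt)
      (fun t _ => (hd2 t).differentiableAt.differentiableWithinAt)
    intro t ht
    rw [interior_Ici] at ht
    rw [(hd2 t).deriv]
    have h8 := hexp t (le_of_lt ht)
    have h9 := hbd t
    nlinarith [mul_le_mul_of_nonneg_left h8 (sq_nonneg c)]
  have hd'0 : d' 0 = 0 := by
    show F' 0 + F 0 * (c * Real.exp (c * 0) - c) - F' 0 = 0
    norm_num
  have hd'nn : ∀ t ∈ Set.Ici (0:ℝ), 0 ≤ d' t := by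
    intro t ht
    have := hd'mono Set.self_mem_Ici ht ht
    rwa [hd'0] at this
  have hdmono : MonotoneOn d (Set.Ici (0:ℝ)) := by
    apply monotoneOn_of_deriv_nonneg (convex_Ici 0)
      (fun t _ => (hd1 t).differentiableAt.continuousAt.continuousWithinAt)
      (fun t _ => (hd1 t).differentiableAt.differentiableWithinAt)
    intro t ht
    rw [interior_Ici] at ht
    rw [(hd1 t).deriv]
    exact hd'nn t (Set.mem_Ici.mpr ht.le)
  have h01 : d 0 ≤ d 1 := hdmono Set.self_mem_Ici (Set.mem_Ici.mpr zero_le_one) zero_le_one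
  have hd0 : d 0 = 0 := by
    show F 0 + 0 * F' 0 + F 0 * (Real.exp (c * 0) - 1 - c * 0) - F 0 = 0
    norm_num
  have hd1v : d 1 = F 0 + F' 0 + F 0 * (Real.exp c - 1 - c) - F 1 := by
    show F 0 + 1 * F' 0 + F 0 * (Real.exp (c * 1) - 1 - c * 1) - F 1 = _
    norm_num
  have hec : Real.exp c - 1 - c ≤ c ^ 2 := by
    have hb2 := Real.exp_bound (x := c) (by rw [abs_of_pos hc]; exact hc1) (n := 2) (by norm_num)
    have hsum : (∑ m ∈ Finset.range 2, c ^ m / (Nat.factorial m : ℝ)) = 1 + c := by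
      simp [Finset.sum_range_succ]
    rw [hsum, abs_of_pos hc] at hb2
    have h10 := (abs_le.mp hb2).2
    norm_num at h10
    nlinarith
  rw [hd0, hd1v] at h01
  nlinarith [h01, hec, hF0]

lemma ode_taylor0 {K : ℝ} (hK : 0 ≤ K) {F F' F'' : ℝ → ℝ}
    (h1 : ∀ t, HasDerivAt F (F' t) t) (h2 : ∀ t, HasDerivAt F' (F'' t) t)
    (hbd : ∀ t, F'' t ≤ K) :
    F 1 ≤ F 0 + F' 0 + K := by
  set d : ℝ → ℝ := fun t => F 0 + t * F' 0 + K * t ^ 2 / 2 - F t with hddef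
  set d' : ℝ → ℝ := fun t => F' 0 + K * t - F' t with hd'def
  have hd1 : ∀ t, HasDerivAt d (d' t) t := by
    intro t
    have hlin : HasDerivAt (fun t : ℝ => F 0 + t * F' 0) (F' 0) t := by
      simpa using ((hasDerivAt_id t).mul_const (F' 0)).const_add (F 0)
    have hsq : HasDerivAt (fun t : ℝ => K * t ^ 2 / 2) (K * t) t := by
      have := ((hasDerivAt_pow 2 t).const_mul K).div_const 2
      refine this.congr_deriv ?_
      push_cast
      ring
    have := (hlin.add hsq).sub (h1 t)
    exact this
  have hd2 : ∀ t, HasDerivAt d' (K - F'' t) t := by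
    intro t
    have hKt : HasDerivAt (fun t : ℝ => F' 0 + K * t) K t := by
      simpa using ((hasDerivAt_id t).const_mul K).const_add (F' 0)
    exact hKt.sub (h2 t)
  have hd'mono : Monotone d' := by
    apply monotone_of_deriv_nonneg (fun t => (hd2 t).differentiableAt)
    intro t
    rw [(hd2 t).deriv]
    have := hbd t
    linarith
  have hd'0 : d' 0 = 0 := by
    show F' 0 + K * 0 - F' 0 = 0
    ring
  have hdmono : MonotoneOn d (Set.Ici (0:ℝ)) := by
    apply monotoneOn_of_deriv_nonneg (convex_Ici 0)
      (fun t _ => (hd1 t).differentiableAt.continuousAt.continuousWithinAt)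
      (fun t _ => (hd1 t).differentiableAt.differentiableWithinAt)
    intro t ht
    rw [interior_Ici] at ht
    rw [(hd1 t).deriv]
    have := hd'mono (le_of_lt ht : (0:ℝ) ≤ t)
    rw [hd'0] at this
    exact this
  have h01 : d 0 ≤ d 1 := hdmono Set.self_mem_Ici (Set.mem_Ici.mpr zero_le_one) zero_le_one
  have hd0 : d 0 = 0 := by
    show F 0 + 0 * F' 0 + K * 0 ^ 2 / 2 - F 0 = 0
    ring
  have hd1v : d 1 = F 0 + F' 0 + K / 2 - F 1 := by
    show F 0 + 1 * F' 0 + K * 1 ^ 2 / 2 - F 1 = _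
    ring
  rw [hd0, hd1v] at h01
  linarith

open scoped BigOperators

noncomputable def dotCLM {n : ℕ} (v : Fin n → ℝ) : (Fin n → ℝ) →L[ℝ] ℝ :=
  LinearMap.toContinuousLinearMap (∑ i, v i • (LinearMap.proj i : (Fin n → ℝ) →ₗ[ℝ] ℝ))

noncomputable def mulVecCLM {m n : ℕ} (M : Matrix (Fin m) (Fin n) ℝ) :
    (Fin n → ℝ) →L[ℝ] (Fin m → ℝ) :=
  LinearMap.toContinuousLinearMap M.mulVecLin

theorem stmt5 {D : ℕ} (p q : ENNReal) (hp : 1 ≤ p) (hq : 1 ≤ q) (hpq : 1/p + 1/q = 1)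
    (f : (Fin D → ℝ) → ℝ) (g : (Fin D → ℝ) → (Fin D → ℝ))
    (Hess : (Fin D → ℝ) → Matrix (Fin D) (Fin D) ℝ)
    (hfnn : ∀ θ, 0 ≤ f θ)
    (hgrad : ∀ θ, HasFDerivAt f (dotCLM (g θ)) θ)
    (hhess : ∀ θ, HasFDerivAt g (mulVecCLM (Hess θ)) θ)
    (H0 H1 : ℝ) (hH0 : 0 ≤ H0) (hH1 : 0 ≤ H1)
    (hnus : ∀ θ, opNorm p q (Hess θ) ≤ H0 + H1 * f θ) :
    ∀ x y, lpNorm p (y - x) ≤ 1 / Real.sqrt H1 →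
      f y ≤ f x + (∑ i, g x i * (y i - x i)) + (H0 + H1 * f x) * (lpNorm p (y - x)) ^ 2 := by
  intro x y hr
  set u : Fin D → ℝ := y - x with hu
  set r := lpNorm p u with hrdef
  have hr0 : 0 ≤ r := lpNorm_nonneg hp u
  have hdot : ∀ v w : Fin D → ℝ, dotCLM v w = ∑ i, v i * w i := by
    intro v w
    simp [dotCLM, LinearMap.sum_apply, LinearMap.proj_apply, smul_eq_mul]
  set θ : ℝ → (Fin D → ℝ) := fun t => x + t • u with hθdef
  have hθ : ∀ t, HasDerivAt θ u t := by
    intro t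
    have := ((hasDerivAt_id t).smul_const u).const_add x
    refine this.congr_deriv ?_; simp
  set φ : ℝ → ℝ := fun t => f (θ t) with hφdef
  set φ1 : ℝ → ℝ := fun t => ∑ i, g (θ t) i * u i with hφ1def
  set φ2 : ℝ → ℝ := fun t => ∑ i, (Hess (θ t)).mulVec u i * u i with hφ2def
  have hdφ : ∀ t, HasDerivAt φ (φ1 t) t := by
    intro t
    have h := (hgrad (θ t)).comp_hasDerivAt t (hθ t)
    have heq : dotCLM (g (θ t)) u = φ1 t := hdot _ _
    rw [heq] at h
    exact h
  have hdg : ∀ t, HasDerivAt (fun s => g (θ s)) ((Hess (θ t)).mulVec u) t := by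
    intro t
    exact (hhess (θ t)).comp_hasDerivAt t (hθ t)
  have hdφ1 : ∀ t, HasDerivAt φ1 (φ2 t) t := by
    intro t
    apply HasDerivAt.fun_sum
    intro i _
    exact (hasDerivAt_pi.mp (hdg t) i).mul_const (u i)
  have hquad : ∀ t, φ2 t ≤ (H0 + H1 * φ t) * r ^ 2 := by
    intro t
    have hpq' : 1/q + 1/p = 1 := by rw [add_comm]; exact hpq
    have hH := holder_sum hq hp hpq' ((Hess (θ t)).mulVec u) u
    have hop := opNorm_mulVec_le hp hq (Hess (θ t)) u
    have hnu := hnus (θ t)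
    calc φ2 t ≤ lpNorm q ((Hess (θ t)).mulVec u) * r := hH
      _ ≤ (opNorm p q (Hess (θ t)) * r) * r := by
          exact mul_le_mul_of_nonneg_right hop hr0
      _ ≤ ((H0 + H1 * f (θ t)) * r) * r := by
          exact mul_le_mul_of_nonneg_right (mul_le_mul_of_nonneg_right hnu hr0) hr0
      _ = (H0 + H1 * φ t) * r ^ 2 := by rw [hφdef]; ring
  have hθ0 : θ 0 = x := by
    show x + (0:ℝ) • u = x
    simp
  have hθ1 : θ 1 = y := by
    show x + (1:ℝ) • u = y
    rw [one_smul, hu]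
    abel
  have hφ0 : φ 0 = f x := by rw [hφdef]; show f (θ 0) = f x; rw [hθ0]
  have hφone : φ 1 = f y := by rw [hφdef]; show f (θ 1) = f y; rw [hθ1]
  have hsum0 : φ1 0 = ∑ i, g x i * (y i - x i) := by
    rw [hφ1def]
    show ∑ i, g (θ 0) i * u i = _
    rw [hθ0]
    apply Finset.sum_congr rfl
    intro i _
    rw [hu]
    rfl
  rcases eq_or_ne u 0 with hu0 | hu0
  · have hr00 : r = 0 := by rw [hrdef, hu0]; exact lpNorm_zero' p hp
    have hyx : y = x := by
      have := hu ▸ hu0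
      exact sub_eq_zero.mp this
    subst hyx
    simp [sub_self, hr00]
  · have hrpos : 0 < r := lpNorm_pos hp hu0
    rcases eq_or_lt_of_le hH1 with hH1' | hH1pos
    · -- H1 = 0
      rw [← hsum0, ← hφ0, ← hφone, ← hH1']
      have hbd : ∀ t, φ2 t ≤ H0 * r ^ 2 := by
        intro t
        have := hquad t
        rw [← hH1'] at this
        simpa using this
      have := ode_taylor0 (by positivity) hdφ hdφ1 hbd
      have hfin : (0 + 0 * φ 0) * r ^ 2 = 0 * r ^ 2 := by ring
      calc φ 1 ≤ φ 0 + φ1 0 + H0 * r ^ 2 := this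
        _ = φ 0 + φ1 0 + (H0 + 0 * φ 0) * r ^ 2 := by ring
    · -- H1 > 0
      set c := Real.sqrt H1 * r with hcdef
      have hsq : 0 < Real.sqrt H1 := Real.sqrt_pos.mpr hH1pos
      have hc : 0 < c := mul_pos hsq hrpos
      have hc1 : c ≤ 1 := by
        calc c ≤ Real.sqrt H1 * (1 / Real.sqrt H1) :=
              mul_le_mul_of_nonneg_left hr (Real.sqrt_nonneg H1)
          _ = 1 := by field_simp
      have hc2 : c ^ 2 = H1 * r ^ 2 := by
        rw [hcdef, mul_pow, Real.sq_sqrt hH1]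
      set ψ : ℝ → ℝ := fun t => φ t + H0 / H1 with hψdef
      have hdψ : ∀ t, HasDerivAt ψ (φ1 t) t := fun t => (hdφ t).add_const _
      have hψnn : ∀ t, 0 ≤ ψ t := fun t => add_nonneg (hfnn _) (div_nonneg hH0 hH1)
      have hψbd : ∀ t, φ2 t ≤ c ^ 2 * ψ t := by
        intro t
        have h5 := hquad t
        have h6 : (H0 + H1 * φ t) * r ^ 2 = c ^ 2 * ψ t := by
          rw [hc2, hψdef]
          field_simp
          ring
        linarith
      have hmain := ode_taylor hc hc1 hdψ hdφ1 hψnn hψbd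
      -- ψ 1 ≤ ψ 0 + φ1 0 + ψ 0 * c ^ 2
      have hψ0 : ψ 0 = φ 0 + H0 / H1 := rfl
      have hψ1 : ψ 1 = φ 1 + H0 / H1 := rfl
      rw [hψ0, hψ1] at hmain
      have hfin : (φ 0 + H0 / H1) * c ^ 2 = (H0 + H1 * φ 0) * r ^ 2 := by
        rw [hc2]
        field_simp
        ring
      rw [← hsum0, ← hφ0, ← hφone]
      linarith [hmain, hfin.le, hfin.ge]
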